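/- Suppose τ : ℤ → ℝ² → ℝ is a family of positive twice continuously differentiable functions satisfying the 2D Toda tau-function equation ∂_u∂_v ln τ_n = 1 − τ_{n−1}τ_{n+1}/τ_n² for all n ∈ ℤ, together with the symmetry τ_{−n+1} = τ_n and the 3-periodicity τ_{n+3} = τ_n for all n ∈ ℤ. Then Ψ := ln(τ₂/τ₁) satisfies the Tzitzeica equation ∂_u∂_v Ψ = exp(Ψ) − exp(−2Ψ). -/

import Mathlib

/-- Mixed second partial derivative ∂_u∂_v of a real-valued function of two real variables. -/
noncomputable def mixedDerivR (f : ℝ → ℝ → ℝ) (u v : ℝ) : ℝ :=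
  deriv (fun u' => deriv (fun v' => f u' v') v) u

private lemma slice_diff {f : ℝ → ℝ → ℝ} (hf : ContDiff ℝ 2 (Function.uncurry f))
    (u : ℝ) : Differentiable ℝ (fun v' => f u v') := by
  have : ContDiff ℝ 2 (fun v' => f u v') :=
    hf.comp (contDiff_const.prodMk contDiff_id)
  exact this.differentiable (by norm_num)

private lemma dslice_contDiff {f : ℝ → ℝ → ℝ} (hf : ContDiff ℝ 2 (Function.uncurry f))
    (v : ℝ) : ContDiff ℝ 1 (fun u' => deriv (fun v' => f u' v') v) := by
  have h : ContDiff ℝ 1 (fun u' => fderiv ℝ (f u') v) :=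
    hf.fderiv contDiff_const (by norm_num)
  have h2 : ContDiff ℝ 1 (fun u' => fderiv ℝ (f u') v 1) :=
    h.clm_apply contDiff_const
  simpa only [deriv] using h2

private lemma mixedDerivR_sub {f g : ℝ → ℝ → ℝ} (hf : ContDiff ℝ 2 (Function.uncurry f))
    (hg : ContDiff ℝ 2 (Function.uncurry g)) (u v : ℝ) :
    mixedDerivR (fun u' v' => f u' v' - g u' v') u v
      = mixedDerivR f u v - mixedDerivR g u v := by
  unfold mixedDerivR
  have key : (fun u' => deriv (fun v' => f u' v' - g u' v') v)
      = fun u' => deriv (fun v' => f u' v') v - deriv (fun v' => g u' v') v := by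
    funext u'
    exact deriv_sub ((slice_diff hf u') v) ((slice_diff hg u') v)
  rw [key]
  exact deriv_sub
    (((dslice_contDiff hf v).differentiable one_ne_zero) u)
    (((dslice_contDiff hg v).differentiable one_ne_zero) u)

/-- If τ : ℤ → ℝ² → ℝ is a family of positive C² functions satisfying the 2D Toda
tau-function equation, the symmetry τ₋ₙ₊₁ = τₙ and the 3-periodicity τₙ₊₃ = τₙ, then
Ψ := ln(τ₂/τ₁) satisfies the Tzitzeica equation. -/
theorem toda_tau_gives_tzitzeica (τ : ℤ → ℝ → ℝ → ℝ)
    (hpos : ∀ (n : ℤ) (u v : ℝ), 0 < τ n u v)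
    (hC2 : ∀ n : ℤ, ContDiff ℝ 2 (Function.uncurry (τ n)))
    (hToda : ∀ (n : ℤ) (u v : ℝ),
      mixedDerivR (fun u' v' => Real.log (τ n u' v')) u v
        = 1 - τ (n - 1) u v * τ (n + 1) u v / (τ n u v) ^ 2)
    (hsym : ∀ (n : ℤ) (u v : ℝ), τ (-n + 1) u v = τ n u v)
    (hper : ∀ (n : ℤ) (u v : ℝ), τ (n + 3) u v = τ n u v) :
    ∀ u v : ℝ,
      mixedDerivR (fun u' v' => Real.log (τ 2 u' v' / τ 1 u' v')) u v
        = Real.exp (Real.log (τ 2 u v / τ 1 u v))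
          - Real.exp (-2 * Real.log (τ 2 u v / τ 1 u v)) := by
  intro u v
  -- log of C² positive function is C²
  have hL : ∀ n : ℤ, ContDiff ℝ 2 (Function.uncurry (fun u' v' => Real.log (τ n u' v'))) := by
    intro n
    rw [contDiff_iff_contDiffAt]
    intro p
    have h1 : ContDiffAt ℝ 2 Real.log (Function.uncurry (τ n) p) :=
      Real.contDiffAt_log.mpr (ne_of_gt (hpos n p.1 p.2))
    exact h1.comp p (hC2 n).contDiffAt
  -- rewrite log of quotient as difference
  have hfun : (fun u' v' => Real.log (τ 2 u' v' / τ 1 u' v'))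
      = fun u' v' => Real.log (τ 2 u' v') - Real.log (τ 1 u' v') := by
    funext u' v'
    exact Real.log_div (ne_of_gt (hpos 2 u' v')) (ne_of_gt (hpos 1 u' v'))
  rw [hfun, mixedDerivR_sub (hL 2) (hL 1) u v, hToda 2 u v, hToda 1 u v]
  simp only [show (2:ℤ)-1 = 1 by norm_num, show (1:ℤ)-1 = 0 by norm_num,
    show (1:ℤ)+1 = 2 by norm_num, show (2:ℤ)+1 = 3 by norm_num]
  -- identifications from symmetry and periodicity
  have h01 : τ 0 u v = τ 1 u v := (hsym 0 u v).symm
  have h31 : τ 3 u v = τ 1 u v := by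
    have := hper 0 u v
    norm_num at this
    rw [this, h01]
  have e1 : Real.exp (Real.log (τ 2 u v / τ 1 u v)) = τ 2 u v / τ 1 u v :=
    Real.exp_log (div_pos (hpos 2 u v) (hpos 1 u v))
  have e2 : Real.exp (-2 * Real.log (τ 2 u v / τ 1 u v))
      = (τ 1 u v) ^ 2 / (τ 2 u v) ^ 2 := by
    have hlog : (-2 : ℝ) * Real.log (τ 2 u v / τ 1 u v)
        = Real.log ((τ 1 u v) ^ 2 / (τ 2 u v) ^ 2) := by
      rw [Real.log_div (ne_of_gt (hpos 2 u v)) (ne_of_gt (hpos 1 u v)),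
        Real.log_div (pow_ne_zero 2 (hpos 1 u v).ne') (pow_ne_zero 2 (hpos 2 u v).ne'), Real.log_pow, Real.log_pow]
      push_cast; ring
    rw [hlog]
    exact Real.exp_log (div_pos (pow_pos (hpos 1 u v) 2) (pow_pos (hpos 2 u v) 2))
  rw [e1, e2, h01, h31]
  have h1 := (hpos 1 u v).ne'
  have h2 := (hpos 2 u v).ne'
  field_simp
  ring
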